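/- arXiv:1710.06418 — 4 statements merged into one kernel-verified Lean document; each statement's English description precedes it below -/
import Mathlib

section
/- Let V be a real vector space equipped with two inner products ⟨·,·⟩ (norm ‖·‖) and ⟨·,·⟩_V (norm ‖·‖_V). Let Δt > 0, θ > 0, 0 ≤ b < θ and F ≥ 0. Let A : V × V → ℝ be a bilinear form with A(v,v) ≥ θ‖v‖_V² for all v ∈ V, let B : V × V → ℝ be a bilinear form with |B(w,v)| ≤ b‖w‖_V‖v‖_V for all w, v ∈ V, and let f ∈ V satisfy |⟨f,v⟩| ≤ F‖v‖_V for all v ∈ V. Suppose u, u⁺ ∈ V satisfy the one-step scheme (1/Δt)⟨u⁺ − u, v⟩ + A(u⁺, v) + B(u, v) = ⟨f, v⟩ for all v ∈ V. Then (1/2)(‖u⁺‖² − ‖u‖²) + (Δt(θ − b)/2)‖u⁺‖_V² + (Δt·b/2)(‖u⁺‖_V² − ‖u‖_V²) ≤ Δt·F²/(2(θ − b)). -/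
open scoped RealInnerProductSpace

/-- Per-step energy estimate for the one-step ensemble scheme
(core of the stability proof, Theorem 3.1). -/
theorem stmt0
    {V : Type*} [NormedAddCommGroup V] [InnerProductSpace ℝ V]
    -- second inner product ⟨·,·⟩_V on V with induced norm nV = ‖·‖_V
    (ipV : V → V → ℝ)
    (hipV_symm : ∀ u v : V, ipV u v = ipV v u)
    (hipV_add : ∀ u v w : V, ipV (u + v) w = ipV u w + ipV v w)
    (hipV_smul : ∀ (c : ℝ) (u v : V), ipV (c • u) v = c * ipV u v)
    (hipV_posdef : ∀ u : V, u ≠ 0 → 0 < ipV u u)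
    (nV : V → ℝ) (hnV : ∀ v : V, nV v = Real.sqrt (ipV v v))
    (Δt θ b F : ℝ)
    (hΔt : 0 < Δt) (hθ : 0 < θ) (hb : 0 ≤ b) (hbθ : b < θ) (hF : 0 ≤ F)
    (A B : V →ₗ[ℝ] V →ₗ[ℝ] ℝ)
    (hA : ∀ v : V, θ * nV v ^ 2 ≤ A v v)
    (hB : ∀ w v : V, |(B w v)| ≤ b * nV w * nV v)
    (f u uplus : V)
    (hf : ∀ v : V, |(⟪f, v⟫)| ≤ F * nV v)
    (hscheme : ∀ v : V,
      (1 / Δt) * ⟪uplus - u, v⟫ + A uplus v + B u v = ⟪f, v⟫) :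
    (1 / 2) * (‖uplus‖ ^ 2 - ‖u‖ ^ 2)
      + (Δt * (θ - b) / 2) * nV uplus ^ 2
      + (Δt * b / 2) * (nV uplus ^ 2 - nV u ^ 2)
      ≤ Δt * F ^ 2 / (2 * (θ - b)) := by
  have hc : (0:ℝ) < θ - b := sub_pos.mpr hbθ
  have hnVnonneg : ∀ v : V, 0 ≤ nV v := fun v => (hnV v) ▸ Real.sqrt_nonneg _
  have heq := hscheme uplus
  have heq2 : ⟪uplus - u, uplus⟫ + Δt * (A uplus uplus) + Δt * (B u uplus)
      = Δt * ⟪f, uplus⟫ := by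
    have := congrArg (fun x => Δt * x) heq
    field_simp at this
    linarith
  have h1 : ⟪uplus - u, uplus⟫ = ‖uplus‖^2 - ⟪u, uplus⟫ := by
    rw [inner_sub_left, real_inner_self_eq_norm_sq]
  have h2 : ⟪u, uplus⟫ ≤ ‖u‖ * ‖uplus‖ := real_inner_le_norm u uplus
  have h3 := hA uplus
  have h4 : -(b * nV u * nV uplus) ≤ B u uplus := neg_le_of_abs_le (hB u uplus)
  have h5 : ⟪f, uplus⟫ ≤ F * nV uplus := le_of_abs_le (hf uplus)
  rw [le_div_iff₀ (by positivity : (0:ℝ) < 2 * (θ - b))]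
  nlinarith [mul_nonneg hΔt.le (sq_nonneg (nV u - nV uplus)),
    mul_nonneg hΔt.le (sq_nonneg (F - (θ - b) * nV uplus)),
    sq_nonneg (‖u‖ - ‖uplus‖), norm_nonneg u, norm_nonneg uplus,
    hnVnonneg u, hnVnonneg uplus,
    mul_nonneg (mul_nonneg hΔt.le hb) (sq_nonneg (nV u - nV uplus)),
    mul_pos hΔt hc]
end

section
/- Let V be a real vector space equipped with two inner products ⟨·,·⟩ (norm ‖·‖) and ⟨·,·⟩_V (norm ‖·‖_V). Let N ≥ 1 be an integer, Δt > 0, and let θ, θ₊, θ₋ be constants with 0 < θ₋ ≤ θ₊ < θ. For each n ∈ {1, …, N} let A_n : V × V → ℝ be a bilinear form with A_n(v,v) ≥ θ‖v‖_V² for all v, let B_n : V × V → ℝ be a bilinear form with |B_n(w,v)| ≤ θ₊‖w‖_V‖v‖_V for all w, v, and let ℓ_n : V → ℝ be a linear functional with |ℓ_n(v)| ≤ F_n‖v‖_V for all v, where F_n ≥ 0. Suppose u⁰, u¹, …, u^N ∈ V satisfy, for every n ∈ {0, …, N−1} and every v ∈ V, (1/Δt)⟨u^{n+1} − u^n, v⟩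 + A_{n+1}(u^{n+1}, v) + B_{n+1}(u^n, v) = ℓ_{n+1}(v). Then ‖u^N‖² + θ₋ Δt ‖u^N‖_V² + (θ − θ₊) Δt ∑_{n=1}^{N} ‖u^n‖_V² ≤ (Δt/(θ − θ₊)) ∑_{n=1}^{N} F_n² + θ₊ Δt ‖u⁰‖_V² + ‖u⁰‖². -/
open scoped RealInnerProductSpace

/-- Stability of the ensemble time-stepping scheme (Theorem 3.1) in abstract form. -/
theorem stmt2
    {V : Type*} [NormedAddCommGroup V] [InnerProductSpace ℝ V]
    -- second inner product ⟨·,·⟩_V on V with induced norm nV = ‖·‖_V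
    (ipV : V → V → ℝ)
    (hipV_symm : ∀ u v : V, ipV u v = ipV v u)
    (hipV_add : ∀ u v w : V, ipV (u + v) w = ipV u w + ipV v w)
    (hipV_smul : ∀ (c : ℝ) (u v : V), ipV (c • u) v = c * ipV u v)
    (hipV_posdef : ∀ u : V, u ≠ 0 → 0 < ipV u u)
    (nV : V → ℝ) (hnV : ∀ v : V, nV v = Real.sqrt (ipV v v))
    (N : ℕ) (hN : 1 ≤ N) (Δt θ θp θm : ℝ)
    (hΔt : 0 < Δt) (hθm : 0 < θm) (hθmp : θm ≤ θp) (hθpθ : θp < θ)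
    (A B : ℕ → V →ₗ[ℝ] V →ₗ[ℝ] ℝ) (l : ℕ → V →ₗ[ℝ] ℝ) (F : ℕ → ℝ)
    (hA : ∀ n, 1 ≤ n → n ≤ N → ∀ v : V, θ * nV v ^ 2 ≤ A n v v)
    (hB : ∀ n, 1 ≤ n → n ≤ N → ∀ w v : V, |(B n w v)| ≤ θp * nV w * nV v)
    (hF : ∀ n, 1 ≤ n → n ≤ N → 0 ≤ F n)
    (hl : ∀ n, 1 ≤ n → n ≤ N → ∀ v : V, |(l n v)| ≤ F n * nV v)
    (u : ℕ → V)
    (hscheme : ∀ n, n < N → ∀ v : V,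
      (1 / Δt) * ⟪u (n + 1) - u n, v⟫ + A (n + 1) (u (n + 1)) v + B (n + 1) (u n) v
        = l (n + 1) v) :
    ‖u N‖ ^ 2 + θm * Δt * nV (u N) ^ 2
        + (θ - θp) * Δt * ∑ n ∈ Finset.Icc 1 N, nV (u n) ^ 2
      ≤ (Δt / (θ - θp)) * ∑ n ∈ Finset.Icc 1 N, F n ^ 2
        + θp * Δt * nV (u 0) ^ 2 + ‖u 0‖ ^ 2 := by
  have hδ : 0 < θ - θp := by linarith
  have hθp : 0 < θp := lt_of_lt_of_le hθm hθmp
  have hnVnn : ∀ v : V, 0 ≤ nV v := fun v => (hnV v) ▸ Real.sqrt_nonneg _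
  -- per-step estimate
  have step : ∀ n, n < N →
      ‖u (n+1)‖^2 + θp * Δt * nV (u (n+1))^2 + (θ - θp) * Δt * nV (u (n+1))^2
        ≤ ‖u n‖^2 + θp * Δt * nV (u n)^2 + Δt * (F (n+1)^2 / (θ - θp)) := by
    intro n hn
    have h1 := hscheme n hn (u (n+1))
    set a := nV (u (n+1)) with ha
    set b := nV (u n) with hb
    set I := (⟪u (n+1) - u n, u (n+1)⟫ : ℝ) with hI
    set At := A (n+1) (u (n+1)) (u (n+1)) with hAt
    set Bt := B (n+1) (u n) (u (n+1)) with hBt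
    set Lt := l (n+1) (u (n+1)) with hLt
    set G := F (n+1)^2 / (θ - θp) with hG
    have h1' : I + Δt * At + Δt * Bt = Δt * Lt := by
      field_simp at h1
      linarith
    have hIge : (‖u (n+1)‖^2 - ‖u n‖^2) / 2 ≤ I := by
      have e1 : I = ‖u (n+1)‖^2 - ⟪u n, u (n+1)⟫ := by
        rw [hI, inner_sub_left, real_inner_self_eq_norm_sq]
      have e2 : (⟪u n, u (n+1)⟫ : ℝ) ≤ ‖u n‖ * ‖u (n+1)‖ := real_inner_le_norm _ _
      have e3 : ‖u n‖ * ‖u (n+1)‖ ≤ (‖u n‖^2 + ‖u (n+1)‖^2) / 2 := by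
        nlinarith [sq_nonneg (‖u n‖ - ‖u (n+1)‖)]
      linarith
    have hAn : θ * a^2 ≤ At := hA (n+1) (by omega) (by omega) (u (n+1))
    have hBn : -(θp * b * a) ≤ Bt := by
      have h := hB (n+1) (by omega) (by omega) (u n) (u (n+1))
      have h2 := neg_abs_le Bt
      linarith
    have hAM : θp * b * a ≤ θp / 2 * (b^2 + a^2) := by
      nlinarith [sq_nonneg (b - a), hθp.le]
    have hLn : Lt ≤ F (n+1) * a := by
      have h := hl (n+1) (by omega) (by omega) (u (n+1))
      have h2 := le_abs_self Lt
      linarith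
    have hyoung : F (n+1) * a ≤ G / 2 + (θ - θp) / 2 * a^2 := by
      have hkey : G / 2 + (θ - θp) / 2 * a^2 - F (n+1) * a
          = (F (n+1) - (θ - θp) * a)^2 / (2 * (θ - θp)) := by
        rw [hG]
        field_simp
        ring
      have hp : 0 ≤ (F (n+1) - (θ - θp) * a)^2 / (2 * (θ - θp)) := by positivity
      linarith
    have hmul : ∀ x y : ℝ, x ≤ y → Δt * x ≤ Δt * y :=
      fun x y h => mul_le_mul_of_nonneg_left h hΔt.le
    have m1 := hmul _ _ hAn
    have m2 := hmul _ _ hBn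
    have m3 := hmul _ _ hAM
    have m4 := hmul _ _ hLn
    have m5 := hmul _ _ hyoung
    linarith
  -- telescoping
  have main : ∀ m, m ≤ N →
      ‖u m‖^2 + θp * Δt * nV (u m)^2
          + (θ - θp) * Δt * ∑ n ∈ Finset.Icc 1 m, nV (u n)^2
        ≤ (Δt / (θ - θp)) * ∑ n ∈ Finset.Icc 1 m, F n^2
          + θp * Δt * nV (u 0)^2 + ‖u 0‖^2 := by
    intro m
    induction m with
    | zero => intro _; simp; linarith
    | succ k ih =>
      intro hk
      have ihk := ih (by omega)
      have hs := step k (by omega)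
      have h1k : 1 ≤ k + 1 := by omega
      rw [Finset.sum_Icc_succ_top h1k, Finset.sum_Icc_succ_top h1k]
      have e1 : (θ - θp) * Δt * (∑ n ∈ Finset.Icc 1 k, nV (u n)^2 + nV (u (k+1))^2)
          = (θ - θp) * Δt * ∑ n ∈ Finset.Icc 1 k, nV (u n)^2
            + (θ - θp) * Δt * nV (u (k+1))^2 := by ring
      have e2 : (Δt / (θ - θp)) * (∑ n ∈ Finset.Icc 1 k, F n^2 + F (k+1)^2)
          = (Δt / (θ - θp)) * ∑ n ∈ Finset.Icc 1 k, F n^2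
            + Δt * (F (k+1)^2 / (θ - θp)) := by
        field_simp
      rw [e1, e2]
      linarith
  have hmain := main N le_rfl
  have hθmθp : θm * Δt * nV (u N)^2 ≤ θp * Δt * nV (u N)^2 := by
    linarith [mul_nonneg (mul_nonneg (sub_nonneg.2 hθmp) hΔt.le) (sq_nonneg (nV (u N)))]
  linarith
end

section
/- Let V be a real vector space equipped with two inner products ⟨·,·⟩ (norm ‖·‖) and ⟨·,·⟩_V (norm ‖·‖_V). Let Δt > 0, θ > 0, b > 0, M ≥ 0, R ≥ 0 and ε > 0. Let A : V × V → ℝ be a bilinear form with A(v,v) ≥ θ‖v‖_V² and |A(w,v)| ≤ M‖w‖_V‖v‖_V for all w, v ∈ V, and let B : V × V → ℝ be a bilinear form with |B(w,v)| ≤ b‖w‖_V‖v‖_V for all w, v ∈ V. Let φ, φ⁺, ρ, ρ⁺, δ ∈ V and let r : V → ℝ be a linear functional with |r(v)| ≤ R‖v‖_V for all v. Suppose (1/Δt)⟨φ⁺ − φ, φ⁺⟩ + A(φ⁺, φ⁺) + B(φ, φ⁺) = A(ρ⁺, φ⁺) + B(ρ, φ⁺) + B(δ, φ⁺) + r(φ⁺).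 Then (1/(2Δt))(‖φ⁺‖² − ‖φ‖²) + (b/2)(‖φ⁺‖_V² − ‖φ‖_V²) + (θ − (1 + ε)b)‖φ⁺‖_V² ≤ (M²/(ε b))‖ρ⁺‖_V² + (b/ε)‖ρ‖_V² + (b/ε)‖δ‖_V² + R²/(ε b). -/
open scoped RealInnerProductSpace

/-- Young's inequality with parameter. -/
lemma young_aux (a x y c : ℝ) (hc : 0 < c) :
    a * x * y ≤ c / 4 * y ^ 2 + a ^ 2 / c * x ^ 2 := by
  have key : c / 4 * y ^ 2 + a ^ 2 / c * x ^ 2 - a * x * y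
      = (c * y - 2 * a * x) ^ 2 / (4 * c) := by
    field_simp
    ring
  nlinarith [sq_nonneg (c * y - 2 * a * x), div_nonneg (sq_nonneg (c * y - 2 * a * x)) (by positivity : (0:ℝ) ≤ 4 * c)]

/-- Per-step error inequality (equation (error5)) in the error analysis of the
ensemble scheme (Theorem 3.2), with Young-parameter ε. -/
theorem stmt6
    {V : Type*} [NormedAddCommGroup V] [InnerProductSpace ℝ V]
    -- second inner product ⟨·,·⟩_V on V with induced norm nV = ‖·‖_V
    (ipV : V → V → ℝ)
    (hipV_symm : ∀ u v : V, ipV u v = ipV v u)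
    (hipV_add : ∀ u v w : V, ipV (u + v) w = ipV u w + ipV v w)
    (hipV_smul : ∀ (c : ℝ) (u v : V), ipV (c • u) v = c * ipV u v)
    (hipV_posdef : ∀ u : V, u ≠ 0 → 0 < ipV u u)
    (nV : V → ℝ) (hnV : ∀ v : V, nV v = Real.sqrt (ipV v v))
    (Δt θ b M R ε : ℝ)
    (hΔt : 0 < Δt) (hθ : 0 < θ) (hb : 0 < b) (hM : 0 ≤ M) (hR : 0 ≤ R) (hε : 0 < ε)
    (A B : V →ₗ[ℝ] V →ₗ[ℝ] ℝ)
    (hA_coer : ∀ v : V, θ * nV v ^ 2 ≤ A v v)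
    (hA_bdd : ∀ w v : V, |(A w v)| ≤ M * nV w * nV v)
    (hB : ∀ w v : V, |(B w v)| ≤ b * nV w * nV v)
    (φ φp ρ ρp δ : V) (r : V →ₗ[ℝ] ℝ)
    (hr : ∀ v : V, |(r v)| ≤ R * nV v)
    (hscheme : (1 / Δt) * ⟪φp - φ, φp⟫ + A φp φp + B φ φp
      = A ρp φp + B ρ φp + B δ φp + r φp) :
    (1 / (2 * Δt)) * (‖φp‖ ^ 2 - ‖φ‖ ^ 2) + (b / 2) * (nV φp ^ 2 - nV φ ^ 2)
        + (θ - (1 + ε) * b) * nV φp ^ 2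
      ≤ (M ^ 2 / (ε * b)) * nV ρp ^ 2 + (b / ε) * nV ρ ^ 2 + (b / ε) * nV δ ^ 2
        + R ^ 2 / (ε * b) := by
  have hn : ∀ v : V, 0 ≤ nV v := fun v => by rw [hnV]; exact Real.sqrt_nonneg _
  have hεb : 0 < ε * b := mul_pos hε hb
  -- inner product inequality
  have hI2 : (1 / (2 * Δt)) * (‖φp‖ ^ 2 - ‖φ‖ ^ 2) ≤ (1 / Δt) * ⟪φp - φ, φp⟫ := by
    have h1 : (‖φp‖ ^ 2 - ‖φ‖ ^ 2) / 2 ≤ (⟪φp - φ, φp⟫ : ℝ) := by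
      have h2 := real_inner_le_norm φ φp
      rw [inner_sub_left, real_inner_self_eq_norm_sq]
      nlinarith [sq_nonneg (‖φp‖ - ‖φ‖)]
    calc (1 / (2 * Δt)) * (‖φp‖ ^ 2 - ‖φ‖ ^ 2)
        = (1 / Δt) * ((‖φp‖ ^ 2 - ‖φ‖ ^ 2) / 2) := by ring
      _ ≤ (1 / Δt) * ⟪φp - φ, φp⟫ :=
          mul_le_mul_of_nonneg_left h1 (by positivity)
  -- bound on -B φ φp
  have hBφ : -(B φ φp) ≤ b / 2 * nV φ ^ 2 + b / 2 * nV φp ^ 2 := by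
    have h1 : -(B φ φp) ≤ b * nV φ * nV φp :=
      (neg_le_abs _).trans (hB φ φp)
    nlinarith [sq_nonneg (nV φ - nV φp), hn φ, hn φp]
  -- Young bounds for RHS terms
  have y1 : (A ρp φp : ℝ) ≤ ε * b / 4 * nV φp ^ 2 + M ^ 2 / (ε * b) * nV ρp ^ 2 :=
    (le_abs_self _).trans <| (hA_bdd ρp φp).trans (young_aux M (nV ρp) (nV φp) (ε * b) hεb)
  have y2 : (B ρ φp : ℝ) ≤ ε * b / 4 * nV φp ^ 2 + b / ε * nV ρ ^ 2 := by
    have := (le_abs_self (B ρ φp)).trans <| (hB ρ φp).trans (young_aux b (nV ρ) (nV φp) (ε * b) hεb)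
    have he : b ^ 2 / (ε * b) = b / ε := by
      field_simp
    rwa [he] at this
  have y3 : (B δ φp : ℝ) ≤ ε * b / 4 * nV φp ^ 2 + b / ε * nV δ ^ 2 := by
    have := (le_abs_self (B δ φp)).trans <| (hB δ φp).trans (young_aux b (nV δ) (nV φp) (ε * b) hεb)
    have he : b ^ 2 / (ε * b) = b / ε := by
      field_simp
    rwa [he] at this
  have y4 : (r φp : ℝ) ≤ ε * b / 4 * nV φp ^ 2 + R ^ 2 / (ε * b) := by
    have h1 : (r φp : ℝ) ≤ R * 1 * nV φp := by
      have := (le_abs_self (r φp)).trans (hr φp)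
      linarith
    have h2 := young_aux R 1 (nV φp) (ε * b) hεb
    calc (r φp : ℝ) ≤ R * 1 * nV φp := h1
      _ ≤ ε * b / 4 * nV φp ^ 2 + R ^ 2 / (ε * b) * 1 ^ 2 := h2
      _ = ε * b / 4 * nV φp ^ 2 + R ^ 2 / (ε * b) := by ring
  have hcoer := hA_coer φp
  linarith [hscheme, hI2, hBφ, y1, y2, y3, y4, hcoer]
end

section
/- Let V be a real vector space equipped with two inner products ⟨·,·⟩ (norm ‖·‖) and ⟨·,·⟩_V (norm ‖·‖_V), and suppose the Poincaré-type inequality ‖v‖ ≤ C_P ‖v‖_V holds for all v ∈ V with a constant C_P > 0. Let V_h ⊆ V be a subspace and P : V → V_h a linear map with ⟨v − P v, w⟩ = 0 for all v ∈ V and w ∈ V_h. Let N ≥ 1, Δt > 0, and 0 < θ₊ < θ, M ≥ 0. For each n ∈ {1, …, N} let A_n, B_n : V × V → ℝ be bilinear forms with A_n(v,v) ≥ θ‖v‖_V², |A_n(w,v)| ≤ M‖w‖_V‖v‖_V and |B_n(w,v)| ≤ θ₊‖w‖_V‖v‖_V for all w, v ∈ V, and let ℓ_n, r_n : V → ℝ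 be linear functionals with |r_n(v)| ≤ R_n‖v‖_V for all v, where R_n ≥ 0. Suppose u⁰, …, u^N ∈ V satisfy the consistency relations (1/Δt)⟨u^{n+1} − u^n, v⟩ + A_{n+1}(u^{n+1}, v) + B_{n+1}(u^{n+1}, v) = ℓ_{n+1}(v) − r_{n+1}(v) for all v ∈ V_h and 0 ≤ n ≤ N−1, and suppose u_h⁰, …, u_h^N ∈ V_h satisfy u_h⁰ = P u⁰ and the scheme (1/Δt)⟨u_h^{n+1} − u_h^n, v⟩ + A_{n+1}(u_h^{n+1}, v) + B_{n+1}(u_h^n, v) = ℓ_{n+1}(v) for all v ∈ V_h and 0 ≤ n ≤ N−1. Assume the approximation bounds ‖u^n − P u^n‖_V ≤ η_n for 0 ≤ n ≤ N and the increment bounds ‖u^{n+1} − u^n‖_V ≤ D_{n+1} for 0 ≤ n ≤ N−1. Then there exists a constant C > 0, depending only on θ, θ₊, M and C_P, such that, writing e^n = u^n − u_h^n, one has ‖e^N‖² + θ₊ Δt ‖e^N‖_V² + (θ − θ₊) Δt ∑_{n=1}^{N} ‖e^n‖_V² ≤ C ( (1 + Δt) η_N² + Δt ∑_{n=0}^{N}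 η_n² + Δt ∑_{n=1}^{N} (D_n² + R_n²) ). -/
open scoped RealInnerProductSpace


lemma sum_Icc_one' (f : ℕ → ℝ) (n : ℕ) :
    ∑ i ∈ Finset.Icc 1 n, f i = ∑ i ∈ Finset.range n, f (i+1) := by
  rw [← Finset.Ico_add_one_right_eq_Icc, Finset.sum_Ico_eq_sum_range]
  simp [add_comm]

section ip
variable {V : Type} [NormedAddCommGroup V] [InnerProductSpace ℝ V]
  (ipV : V → V → ℝ)
  (hsymm : ∀ u v : V, ipV u v = ipV v u)
  (hadd : ∀ u v w : V, ipV (u + v) w = ipV u w + ipV v w)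
  (hsmul : ∀ (c : ℝ) (u v : V), ipV (c • u) v = c * ipV u v)
  (hpos : ∀ u : V, u ≠ 0 → 0 < ipV u u)
  (nV : V → ℝ) (hnV : ∀ v : V, nV v = Real.sqrt (ipV v v))

include hsmul in
lemma ip_zero_left' (v : V) : ipV 0 v = 0 := by
  have := hsmul 0 0 v; simpa using this

include hsmul hpos in
lemma ip_self_nonneg' (v : V) : 0 ≤ ipV v v := by
  by_cases h : v = 0
  · simp [h, ip_zero_left' ipV hsmul]
  · exact (hpos v h).le

omit [NormedAddCommGroup V] [InnerProductSpace ℝ V] in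
include hnV in
lemma nV_nonneg' (v : V) : 0 ≤ nV v := by rw [hnV]; exact Real.sqrt_nonneg _

include hsmul hpos hnV in
lemma nV_sq' (v : V) : nV v ^ 2 = ipV v v := by
  rw [hnV]; exact Real.sq_sqrt (ip_self_nonneg' ipV hsmul hpos v)

include hsmul hnV in
lemma nV_zero' : nV (0 : V) = 0 := by
  rw [hnV, ip_zero_left' ipV hsmul, Real.sqrt_zero]

omit hsymm in
include hadd hsmul in
lemma ip_sub_left' (a b c : V) : ipV (a - b) c = ipV a c - ipV b c := by
  have : a - b = a + (-1 : ℝ) • b := by rw [neg_one_smul]; abel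
  rw [this, hadd, hsmul]; ring

include hsymm hadd hsmul hpos hnV in
lemma nV_add_sq' (a b : V) : nV (a + b) ^ 2 ≤ 2 * nV a ^ 2 + 2 * nV b ^ 2 := by
  have e1 : ipV (a + b) (a + b) = ipV a a + 2 * ipV a b + ipV b b := by
    rw [hadd, hsymm a (a+b), hsymm b (a+b), hadd, hadd, hsymm a b]; ring
  have e2 : ipV (a - b) (a - b) = ipV a a - 2 * ipV a b + ipV b b := by
    rw [ip_sub_left' ipV hadd hsmul, hsymm a (a-b), hsymm b (a-b),
      ip_sub_left' ipV hadd hsmul, ip_sub_left' ipV hadd hsmul, hsymm a b]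
    ring
  have h2 := ip_self_nonneg' ipV hsmul hpos (a - b)
  rw [nV_sq' ipV hsmul hpos nV hnV, nV_sq' ipV hsmul hpos nV hnV,
    nV_sq' ipV hsmul hpos nV hnV, e1]
  linarith [e2 ▸ h2]

end ip

lemma young1' (c ci k x : ℝ) (hc : 0 < c) (hci : c * ci = 1) :
    k * x ≤ k^2*ci/2 + c/2 * x^2 := by
  have h2 : 2*c*(k*x) ≤ 2*c*(k^2*ci/2 + c/2*x^2) := by
    have e : 2*c*(k^2*ci/2 + c/2*x^2) = (c*ci)*k^2 + c^2*x^2 := by ring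
    rw [e, hci, one_mul]
    nlinarith [sq_nonneg (k - c*x)]
  exact le_of_mul_le_mul_left h2 (by linarith)

lemma four_sq (a b c d : ℝ) : (a+b+c+d)^2 ≤ 4*(a^2+b^2+c^2+d^2) := by
  nlinarith [sq_nonneg (a-b), sq_nonneg (a-c), sq_nonneg (a-d), sq_nonneg (b-c),
    sq_nonneg (b-d), sq_nonneg (c-d)]

lemma norm_split (s a b cp e : ℝ) (hs : 0 ≤ s) (hab : s ≤ a + b) (ha : 0 ≤ a)
    (hb : 0 ≤ b) (hacp : a ≤ cp * e) (hcp : 0 ≤ cp) (he : 0 ≤ e) :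
    s^2 ≤ 2*cp^2*e^2 + 2*b^2 := by
  nlinarith [sq_nonneg (a-b), mul_nonneg hcp he]

lemma young2 (t x y : ℝ) (ht : 0 ≤ t) : t*(y*x) ≤ t/2*x^2 + t/2*y^2 := by
  nlinarith [sq_nonneg (x-y)]

set_option maxHeartbeats 4000000 in
/-- Convergence of the fully discrete ensemble scheme (Theorem 3.2) in abstract form:
the constant `C` depends only on `θ`, `θp`, `M` and `CP`. -/
theorem stmt7 (θ θp M CP : ℝ) (hθp : 0 < θp) (hθpθ : θp < θ) (hM : 0 ≤ M) (hCP : 0 < CP) :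
    ∃ C : ℝ, 0 < C ∧
      ∀ (V : Type) (_ : NormedAddCommGroup V), ∀ (_ : InnerProductSpace ℝ V),
      -- second inner product ⟨·,·⟩_V on V with induced norm nV = ‖·‖_V
      ∀ (ipV : V → V → ℝ),
      (∀ u v : V, ipV u v = ipV v u) →
      (∀ u v w : V, ipV (u + v) w = ipV u w + ipV v w) →
      (∀ (c : ℝ) (u v : V), ipV (c • u) v = c * ipV u v) →
      (∀ u : V, u ≠ 0 → 0 < ipV u u) →
      ∀ (nV : V → ℝ), (∀ v : V, nV v = Real.sqrt (ipV v v)) →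
      -- Poincaré-type inequality
      (∀ v : V, ‖v‖ ≤ CP * nV v) →
      -- subspace Vh and projection P
      ∀ (Vh : Submodule ℝ V) (P : V →ₗ[ℝ] V),
      (∀ v : V, P v ∈ Vh) →
      (∀ v : V, ∀ w ∈ Vh, ⟪v - P v, w⟫ = (0 : ℝ)) →
      ∀ (N : ℕ), 1 ≤ N → ∀ (Δt : ℝ), 0 < Δt →
      ∀ (A B : ℕ → V →ₗ[ℝ] V →ₗ[ℝ] ℝ) (l r : ℕ → V →ₗ[ℝ] ℝ) (R : ℕ → ℝ),
      (∀ n, 1 ≤ n → n ≤ N → ∀ v : V, θ * nV v ^ 2 ≤ A n v v) →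
      (∀ n, 1 ≤ n → n ≤ N → ∀ w v : V, |(A n w v)| ≤ M * nV w * nV v) →
      (∀ n, 1 ≤ n → n ≤ N → ∀ w v : V, |(B n w v)| ≤ θp * nV w * nV v) →
      (∀ n, 1 ≤ n → n ≤ N → 0 ≤ R n) →
      (∀ n, 1 ≤ n → n ≤ N → ∀ v : V, |(r n v)| ≤ R n * nV v) →
      ∀ (u uh : ℕ → V) (η D : ℕ → ℝ),
      -- consistency relations for the exact solution, tested against Vh
      (∀ n, n < N → ∀ v ∈ Vh,
        (1 / Δt) * ⟪u (n + 1) - u n, v⟫ + A (n + 1) (u (n + 1)) v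
          + B (n + 1) (u (n + 1)) v = l (n + 1) v - r (n + 1) v) →
      -- the discrete scheme
      (∀ n, n ≤ N → uh n ∈ Vh) →
      uh 0 = P (u 0) →
      (∀ n, n < N → ∀ v ∈ Vh,
        (1 / Δt) * ⟪uh (n + 1) - uh n, v⟫ + A (n + 1) (uh (n + 1)) v
          + B (n + 1) (uh n) v = l (n + 1) v) →
      -- approximation and increment bounds
      (∀ n, n ≤ N → nV (u n - P (u n)) ≤ η n) →
      (∀ n, n < N → nV (u (n + 1) - u n) ≤ D (n + 1)) →
      ‖u N - uh N‖ ^ 2 + θp * Δt * nV (u N - uh N) ^ 2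
          + (θ - θp) * Δt * ∑ n ∈ Finset.Icc 1 N, nV (u n - uh n) ^ 2
        ≤ C * ((1 + Δt) * η N ^ 2 + Δt * ∑ n ∈ Finset.range (N + 1), η n ^ 2
            + Δt * ∑ n ∈ Finset.Icc 1 N, (D n ^ 2 + R n ^ 2)) := by
  have hc : (0:ℝ) < θ - θp := by linarith
  have hdiv : (0:ℝ) ≤ 8*(M^2+θp^2+1)/(θ-θp) :=
    div_nonneg (by positivity) hc.le
  obtain ⟨C, hCdef⟩ : ∃ C : ℝ, C = 2*CP^2 + 2*θp + 2*θ + 8*(M^2+θp^2+1)/(θ-θp) := ⟨_, rfl⟩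
  have hCpos : 0 < C := by rw [hCdef]; nlinarith [sq_nonneg CP]
  obtain ⟨ci, hci⟩ : ∃ ci : ℝ, (θ-θp) * ci = 1 := ⟨(θ-θp)⁻¹, mul_inv_cancel₀ hc.ne'⟩
  have hcipos : 0 < ci := by nlinarith [hci]
  have hcival : ci = 1/(θ-θp) := eq_one_div_of_mul_eq_one_right hci
  refine ⟨C, hCpos, ?_⟩
  intro V _ _ ipV hsymm hadd hsmul hpos nV hnV hPoin Vh P hPmem horth N hN Δt hΔt
    A B l r R hcoer hAb hBb hR0 hrb u uh η D hcons huhmem huh0 hscheme happrox hincr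
  -- shorthands
  obtain ⟨φ, hφdef⟩ : ∃ f : ℕ → V, f = fun n => P (u n) - uh n := ⟨_, rfl⟩
  obtain ⟨ηv, hηvdef⟩ : ∃ f : ℕ → V, f = fun n => u n - P (u n) := ⟨_, rfl⟩
  have hφmem : ∀ n, n ≤ N → φ n ∈ Vh := fun n hn => by
    rw [hφdef]; exact Submodule.sub_mem _ (hPmem _) (huhmem n hn)
  have hφ0 : φ 0 = 0 := by simp [hφdef, huh0]
  have hnVnn : ∀ v : V, 0 ≤ nV v := nV_nonneg' ipV nV hnV
  have hηb : ∀ n, n ≤ N → nV (ηv n) ≤ η n := fun n hn => by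
    rw [hηvdef]; exact happrox n hn
  have hη0 : ∀ n, n ≤ N → 0 ≤ η n := fun n hn => le_trans (hnVnn _) (hηb n hn)
  obtain ⟨K, hKdef⟩ : ∃ f : ℕ → ℝ, f = fun n => M * η (n+1) + θp * D (n+1) + θp * η n + R (n+1) := ⟨_, rfl⟩
  -- error equation
  have key : ∀ n, n < N → ∀ v ∈ Vh,
      (1/Δt) * ⟪φ (n+1) - φ n, v⟫ + A (n+1) (φ (n+1)) v
        = -(A (n+1) (ηv (n+1)) v) - B (n+1) (u (n+1) - u n) v - B (n+1) (ηv n) v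
          - B (n+1) (φ n) v - r (n+1) v := by
    intro n hn v hv
    have h1 := hcons n hn v hv
    have h2 := hscheme n hn v hv
    have o1 := horth (u (n+1)) v hv
    have o2 := horth (u n) v hv
    have i1 : ⟪u (n+1) - u n, v⟫
        = ⟪uh (n+1) - uh n, v⟫ + ⟪φ (n+1) - φ n, v⟫ := by
      have hdecomp : u (n+1) - u n
          = ((uh (n+1) - uh n) + (φ (n+1) - φ n))
            + ((u (n+1) - P (u (n+1))) - (u n - P (u n))) := by
        simp only [hφdef]; abel
      have o3 : ⟪(u (n+1) - P (u (n+1))) - (u n - P (u n)), v⟫ = (0:ℝ) := by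
        rw [inner_sub_left, o1, o2]; ring
      rw [hdecomp, inner_add_left, inner_add_left, o3]; ring
    have a1 : A (n+1) (u (n+1)) v
        = A (n+1) (uh (n+1)) v + A (n+1) (ηv (n+1)) v + A (n+1) (φ (n+1)) v := by
      have hu : u (n+1) = uh (n+1) + ηv (n+1) + φ (n+1) := by
        simp only [hφdef, hηvdef]; abel
      rw [hu, map_add, map_add, LinearMap.add_apply, LinearMap.add_apply]
    have b1 : B (n+1) (u (n+1)) v
        = B (n+1) (uh n) v + B (n+1) (u (n+1) - u n) v + B (n+1) (ηv n) v
          + B (n+1) (φ n) v := by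
      have hu : u (n+1) = uh n + (u (n+1) - u n) + ηv n + φ n := by
        simp only [hφdef, hηvdef]; abel
      conv_lhs => rw [hu]
      rw [map_add, map_add, map_add, LinearMap.add_apply, LinearMap.add_apply,
        LinearMap.add_apply]
    rw [i1, mul_add] at h1
    linarith
  -- per-step estimate
  have step : ∀ n, n < N →
      ‖φ (n+1)‖^2 - ‖φ n‖^2 + θp*Δt*nV (φ (n+1))^2 - θp*Δt*nV (φ n)^2
        + (θ-θp)*Δt*nV (φ (n+1))^2 ≤ Δt * (K n ^2 * ci) := by
    intro n hn
    have hn1 : 1 ≤ n+1 := Nat.le_add_left 1 n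
    have hnN : n+1 ≤ N := hn
    have hvmem := hφmem (n+1) hnN
    have hmain := key n hn (φ (n+1)) hvmem
    have hx0 : 0 ≤ nV (φ (n+1)) := hnVnn _
    have hy0 : 0 ≤ nV (φ n) := hnVnn _
    -- lower bound on the difference inner product
    have hIlow : (‖φ (n+1)‖^2 - ‖φ n‖^2)/2 ≤ ⟪φ (n+1) - φ n, φ (n+1)⟫ := by
      have h1 : ⟪φ (n+1) - φ n, φ (n+1)⟫ = ‖φ (n+1)‖^2 - ⟪φ n, φ (n+1)⟫ := by
        rw [inner_sub_left, real_inner_self_eq_norm_sq]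
      have h2 : ⟪φ n, φ (n+1)⟫ ≤ ‖φ n‖ * ‖φ (n+1)‖ := real_inner_le_norm _ _
      nlinarith [sq_nonneg (‖φ n‖ - ‖φ (n+1)‖)]
    -- coercivity
    have hA := hcoer (n+1) hn1 hnN (φ (n+1))
    -- bounds on the right-hand side terms
    have bA : |A (n+1) (ηv (n+1)) (φ (n+1))| ≤ M * η (n+1) * nV (φ (n+1)) := by
      refine (hAb (n+1) hn1 hnN _ _).trans ?_
      exact mul_le_mul_of_nonneg_right (mul_le_mul_of_nonneg_left (hηb (n+1) hnN) hM) hx0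
    have bB1 : |B (n+1) (u (n+1) - u n) (φ (n+1))| ≤ θp * D (n+1) * nV (φ (n+1)) := by
      refine (hBb (n+1) hn1 hnN _ _).trans ?_
      exact mul_le_mul_of_nonneg_right (mul_le_mul_of_nonneg_left (hincr n hn) hθp.le) hx0
    have bB2 : |B (n+1) (ηv n) (φ (n+1))| ≤ θp * η n * nV (φ (n+1)) := by
      refine (hBb (n+1) hn1 hnN _ _).trans ?_
      exact mul_le_mul_of_nonneg_right (mul_le_mul_of_nonneg_left (hηb n (le_of_lt hn)) hθp.le) hx0
    have bB3 : |B (n+1) (φ n) (φ (n+1))| ≤ θp * nV (φ n) * nV (φ (n+1)) :=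
      hBb (n+1) hn1 hnN _ _
    have br : |r (n+1) (φ (n+1))| ≤ R (n+1) * nV (φ (n+1)) := hrb (n+1) hn1 hnN _
    have hRHS : -(A (n+1) (ηv (n+1)) (φ (n+1))) - B (n+1) (u (n+1) - u n) (φ (n+1))
          - B (n+1) (ηv n) (φ (n+1)) - B (n+1) (φ n) (φ (n+1)) - r (n+1) (φ (n+1))
        ≤ K n * nV (φ (n+1)) + θp * (nV (φ n) * nV (φ (n+1))) := by
      have e1 := (abs_le.mp bA).1
      have e2 := (abs_le.mp bB1).1
      have e3 := (abs_le.mp bB2).1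
      have e4 := (abs_le.mp bB3).1
      have e5 := (abs_le.mp br).1
      simp only [hKdef]
      ring_nf
      ring_nf at e1 e2 e3 e4 e5
      linarith
    -- turn the equation into an inequality
    have hI : ⟪φ (n+1) - φ n, φ (n+1)⟫
        = Δt * ((-(A (n+1) (ηv (n+1)) (φ (n+1))) - B (n+1) (u (n+1) - u n) (φ (n+1))
          - B (n+1) (ηv n) (φ (n+1)) - B (n+1) (φ n) (φ (n+1)) - r (n+1) (φ (n+1)))
          - A (n+1) (φ (n+1)) (φ (n+1))) := by
      have h9 : (1/Δt) * ⟪φ (n+1) - φ n, φ (n+1)⟫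
          = (-(A (n+1) (ηv (n+1)) (φ (n+1))) - B (n+1) (u (n+1) - u n) (φ (n+1))
            - B (n+1) (ηv n) (φ (n+1)) - B (n+1) (φ n) (φ (n+1)) - r (n+1) (φ (n+1)))
            - A (n+1) (φ (n+1)) (φ (n+1)) := by linarith
      rw [← h9, ← mul_assoc, mul_one_div, div_self hΔt.ne', one_mul]
    have hchain : (‖φ (n+1)‖^2 - ‖φ n‖^2)/2
        ≤ Δt * (K n * nV (φ (n+1)) + θp * (nV (φ n) * nV (φ (n+1))) - θ * nV (φ (n+1))^2) := by
      calc (‖φ (n+1)‖^2 - ‖φ n‖^2)/2 ≤ ⟪φ (n+1) - φ n, φ (n+1)⟫ := hIlow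
        _ = _ := hI
        _ ≤ _ := by
            apply mul_le_mul_of_nonneg_left _ hΔt.le
            linarith
    -- Young's inequalities
    have h2c : (0:ℝ) < 2*(θ-θp) := by linarith
    have hY1 : K n * nV (φ (n+1))
        ≤ K n^2*ci/2 + (θ-θp)/2 * nV (φ (n+1))^2 := young1' _ _ _ _ hc hci
    have hY2 : θp * (nV (φ n) * nV (φ (n+1)))
        ≤ θp/2 * nV (φ (n+1))^2 + θp/2 * nV (φ n)^2 := young2 θp _ _ hθp.le
    have h7 : Δt * (K n * nV (φ (n+1)) + θp * (nV (φ n) * nV (φ (n+1))) - θ * nV (φ (n+1))^2)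
        ≤ Δt * (K n^2*ci/2 + (θ-θp)/2 * nV (φ (n+1))^2 + θp/2 * nV (φ (n+1))^2
          + θp/2 * nV (φ n)^2 - θ * nV (φ (n+1))^2) := by
      apply mul_le_mul_of_nonneg_left _ hΔt.le
      linarith
    have h8 : Δt * (K n ^2 * ci) = 2 * (Δt * (K n^2*ci/2)) := by ring
    rw [h8]
    linarith [hchain, h7]
  -- discrete Gronwall by induction
  have main : ∀ m, m ≤ N →
      ‖φ m‖^2 + θp*Δt*nV (φ m)^2 + (θ-θp)*Δt*(∑ n ∈ Finset.range m, nV (φ (n+1))^2)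
        ≤ ∑ n ∈ Finset.range m, Δt * (K n ^2 * ci) := by
    intro m
    induction m with
    | zero =>
      intro _
      simp [hφ0, nV_zero' ipV hsmul nV hnV]
    | succ m ih =>
      intro hm
      have h1 := ih (Nat.le_of_succ_le hm)
      have h2 := step m (Nat.lt_of_succ_le hm)
      rw [Finset.sum_range_succ, Finset.sum_range_succ]
      linarith
  have hSφ := main N le_rfl
  -- nonnegativity of sums
  have hSNnn : (0:ℝ) ≤ ∑ n ∈ Finset.range (N+1), η n ^2 :=
    Finset.sum_nonneg fun n _ => sq_nonneg _
  have hSDnn : (0:ℝ) ≤ ∑ n ∈ Finset.Icc 1 N, (D n^2 + R n^2) :=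
    Finset.sum_nonneg fun n _ => add_nonneg (sq_nonneg _) (sq_nonneg _)
  have hTDnn : (0:ℝ) ≤ ∑ n ∈ Finset.range N, D (n+1)^2 :=
    Finset.sum_nonneg fun n _ => sq_nonneg _
  have hTRnn : (0:ℝ) ≤ ∑ n ∈ Finset.range N, R (n+1)^2 :=
    Finset.sum_nonneg fun n _ => sq_nonneg _
  -- pointwise bound on K
  have hKb : ∀ n ∈ Finset.range N, K n ^2
      ≤ 4*(M^2*η (n+1)^2 + θp^2*D (n+1)^2 + θp^2*η n^2 + R (n+1)^2) := by
    intro n _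
    simp only [hKdef]
    linarith [four_sq (M*η (n+1)) (θp*D (n+1)) (θp*η n) (R (n+1))]
  have hdiv2 : (0:ℝ) ≤ Δt*ci := mul_nonneg hΔt.le hcipos.le
  have hsumK : ∑ n ∈ Finset.range N, Δt * (K n ^2 * ci)
      ≤ Δt*ci * ∑ n ∈ Finset.range N,
          4*(M^2*η (n+1)^2 + θp^2*D (n+1)^2 + θp^2*η n^2 + R (n+1)^2) := by
    rw [Finset.mul_sum]
    refine Finset.sum_le_sum fun n hn => ?_
    have h2 : Δt * (K n ^2 * ci) = Δt*ci * K n^2 := by ring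
    rw [h2]
    exact mul_le_mul_of_nonneg_left (hKb n hn) hdiv2
  have hsplit : ∑ n ∈ Finset.range N,
        4*(M^2*η (n+1)^2 + θp^2*D (n+1)^2 + θp^2*η n^2 + R (n+1)^2)
      = 4*M^2*(∑ n ∈ Finset.range N, η (n+1)^2)
        + 4*θp^2*(∑ n ∈ Finset.range N, D (n+1)^2)
        + 4*θp^2*(∑ n ∈ Finset.range N, η n^2)
        + 4*(∑ n ∈ Finset.range N, R (n+1)^2) := by
    rw [Finset.mul_sum, Finset.mul_sum, Finset.mul_sum, Finset.mul_sum,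
      ← Finset.sum_add_distrib, ← Finset.sum_add_distrib, ← Finset.sum_add_distrib]
    exact Finset.sum_congr rfl fun n _ => by ring
  have hT1 : ∑ n ∈ Finset.range N, η (n+1)^2 ≤ ∑ n ∈ Finset.range (N+1), η n^2 := by
    rw [Finset.sum_range_succ']
    linarith [sq_nonneg (η 0)]
  have hT0 : ∑ n ∈ Finset.range N, η n^2 ≤ ∑ n ∈ Finset.range (N+1), η n^2 := by
    rw [Finset.sum_range_succ]
    linarith [sq_nonneg (η N)]
  have hTDR : (∑ n ∈ Finset.range N, D (n+1)^2) + (∑ n ∈ Finset.range N, R (n+1)^2)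
      = ∑ n ∈ Finset.Icc 1 N, (D n^2 + R n^2) := by
    rw [sum_Icc_one', Finset.sum_add_distrib]
  -- combine the K-sum bound
  have hX : 4*M^2*(∑ n ∈ Finset.range N, η (n+1)^2)
        + 4*θp^2*(∑ n ∈ Finset.range N, D (n+1)^2)
        + 4*θp^2*(∑ n ∈ Finset.range N, η n^2)
        + 4*(∑ n ∈ Finset.range N, R (n+1)^2)
      ≤ 4*(M^2+θp^2)*(∑ n ∈ Finset.range (N+1), η n^2)
        + 4*(θp^2+1)*((∑ n ∈ Finset.range N, D (n+1)^2)
          + (∑ n ∈ Finset.range N, R (n+1)^2)) := by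
    have e1 : 4*M^2*(∑ n ∈ Finset.range N, η (n+1)^2)
        ≤ 4*M^2*(∑ n ∈ Finset.range (N+1), η n^2) :=
      mul_le_mul_of_nonneg_left hT1 (by positivity)
    have e2 : 4*θp^2*(∑ n ∈ Finset.range N, η n^2)
        ≤ 4*θp^2*(∑ n ∈ Finset.range (N+1), η n^2) :=
      mul_le_mul_of_nonneg_left hT0 (by positivity)
    have e3 : (0:ℝ) ≤ θp^2*(∑ n ∈ Finset.range N, R (n+1)^2) :=
      mul_nonneg (sq_nonneg _) hTRnn
    linarith [e1, e2, e3, hTDnn]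
  have hG2 : ‖φ N‖^2 + θp*Δt*nV (φ N)^2
        + (θ-θp)*Δt*(∑ n ∈ Finset.range N, nV (φ (n+1))^2)
      ≤ Δt*ci * (4*(M^2+θp^2)*(∑ n ∈ Finset.range (N+1), η n^2)
        + 4*(θp^2+1)*(∑ n ∈ Finset.Icc 1 N, (D n^2 + R n^2))) := by
    refine (hSφ.trans hsumK).trans ?_
    rw [hsplit, ← hTDR]
    exact mul_le_mul_of_nonneg_left hX hdiv2
  -- convert the error back from φ to u - uh
  have heN : u N - uh N = ηv N + φ N := by simp only [hφdef, hηvdef]; abel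
  have hnrm : ‖u N - uh N‖^2 ≤ 2*CP^2*η N^2 + 2*‖φ N‖^2 := by
    rw [heN]
    have h1 : ‖ηv N + φ N‖ ≤ ‖ηv N‖ + ‖φ N‖ := norm_add_le _ _
    have h2 : ‖ηv N‖ ≤ CP * η N :=
      le_trans (hPoin _) (mul_le_mul_of_nonneg_left (hηb N le_rfl) hCP.le)
    exact norm_split _ _ _ _ _ (norm_nonneg _) h1 (norm_nonneg _) (norm_nonneg _)
      h2 hCP.le (hη0 N le_rfl)
  have hnVeN : nV (u N - uh N)^2 ≤ 2*η N^2 + 2*nV (φ N)^2 := by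
    rw [heN]
    have h2 := nV_add_sq' ipV hsymm hadd hsmul hpos nV hnV (ηv N) (φ N)
    have h3 : nV (ηv N)^2 ≤ η N^2 := pow_le_pow_left₀ (hnVnn _) (hηb N le_rfl) 2
    linarith
  have hsum_e : ∑ n ∈ Finset.Icc 1 N, nV (u n - uh n)^2
      ≤ 2*(∑ n ∈ Finset.range N, η (n+1)^2)
        + 2*(∑ n ∈ Finset.range N, nV (φ (n+1))^2) := by
    rw [sum_Icc_one' (fun n => nV (u n - uh n)^2)]
    have h1 : ∀ n ∈ Finset.range N, nV (u (n+1) - uh (n+1))^2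
        ≤ 2*η (n+1)^2 + 2*nV (φ (n+1))^2 := by
      intro n hn
      have hd : u (n+1) - uh (n+1) = ηv (n+1) + φ (n+1) := by
        simp only [hφdef, hηvdef]; abel
      rw [hd]
      have h2 := nV_add_sq' ipV hsymm hadd hsmul hpos nV hnV (ηv (n+1)) (φ (n+1))
      have h3 : nV (ηv (n+1))^2 ≤ η (n+1)^2 :=
        pow_le_pow_left₀ (hnVnn _) (hηb (n+1) (Finset.mem_range.mp hn)) 2
      linarith
    calc ∑ n ∈ Finset.range N, nV (u (n+1) - uh (n+1))^2
        ≤ ∑ n ∈ Finset.range N, (2*η (n+1)^2 + 2*nV (φ (n+1))^2) := Finset.sum_le_sum h1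
      _ = _ := by rw [Finset.sum_add_distrib, ← Finset.mul_sum, ← Finset.mul_sum]
  -- multiplied versions
  have m2 : θp*Δt*nV (u N - uh N)^2 ≤ θp*Δt*(2*η N^2 + 2*nV (φ N)^2) :=
    mul_le_mul_of_nonneg_left hnVeN (mul_nonneg hθp.le hΔt.le)
  have m3 : (θ-θp)*Δt*(∑ n ∈ Finset.Icc 1 N, nV (u n - uh n)^2)
      ≤ (θ-θp)*Δt*(2*(∑ n ∈ Finset.range N, η (n+1)^2)
        + 2*(∑ n ∈ Finset.range N, nV (φ (n+1))^2)) :=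
    mul_le_mul_of_nonneg_left hsum_e (mul_nonneg hc.le hΔt.le)
  have m4 : ((θ-θp)*Δt)*(∑ n ∈ Finset.range N, η (n+1)^2)
      ≤ ((θ-θp)*Δt)*(∑ n ∈ Finset.range (N+1), η n^2) :=
    mul_le_mul_of_nonneg_left hT1 (mul_nonneg hc.le hΔt.le)
  -- inequalities on the constant C
  have hC1 : 2*CP^2 ≤ C := by rw [hCdef]; linarith [hdiv]
  have hC2 : 2*θp ≤ C := by rw [hCdef]; linarith [hdiv, sq_nonneg CP]
  have hC3 : 2*(θ-θp) + 8*(M^2+θp^2)*ci ≤ C := by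
    rw [hCdef, hcival, mul_one_div]
    have h : 8*(M^2+θp^2)/(θ-θp) ≤ 8*(M^2+θp^2+1)/(θ-θp) :=
      (div_le_div_iff_of_pos_right hc).mpr (by linarith)
    linarith [sq_nonneg CP]
  have hC4 : 8*(θp^2+1)*ci ≤ C := by
    rw [hCdef, hcival, mul_one_div]
    have h : 8*(θp^2+1)/(θ-θp) ≤ 8*(M^2+θp^2+1)/(θ-θp) :=
      (div_le_div_iff_of_pos_right hc).mpr (by nlinarith [sq_nonneg M])
    linarith [sq_nonneg CP]
  have f1 : 2*CP^2*η N^2 ≤ C*η N^2 :=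
    mul_le_mul_of_nonneg_right hC1 (sq_nonneg _)
  have f2 : (2*θp)*(Δt*η N^2) ≤ C*(Δt*η N^2) :=
    mul_le_mul_of_nonneg_right hC2 (mul_nonneg hΔt.le (sq_nonneg _))
  have f3 : (2*(θ-θp) + 8*(M^2+θp^2)*ci)*(Δt*(∑ n ∈ Finset.range (N+1), η n^2))
      ≤ C*(Δt*(∑ n ∈ Finset.range (N+1), η n^2)) :=
    mul_le_mul_of_nonneg_right hC3 (mul_nonneg hΔt.le hSNnn)
  have f4 : (8*(θp^2+1)*ci)*(Δt*(∑ n ∈ Finset.Icc 1 N, (D n^2 + R n^2)))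
      ≤ C*(Δt*(∑ n ∈ Finset.Icc 1 N, (D n^2 + R n^2))) :=
    mul_le_mul_of_nonneg_right hC4 (mul_nonneg hΔt.le hSDnn)
  linarith [hnrm, m2, m3, m4, hG2, f1, f2, f3, f4]
end
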